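/- Let A be a symmetric d×d real matrix, ξ ∈ ℝ^d a nonzero vector, B a symmetric d×d matrix, and define ψ(v) = ⟨ξ, v⟩ + vᵀBv. Let ζ = 4‖B‖/|ξ| where ‖B‖ is the operator norm. If 0 < ε < ζ⁻¹, then any v in the closed ball B̄(0,ε) at which ψ attains its maximum over B̄(0,ε) satisfies |v| = ε and |v − ε|ξ|⁻¹ξ| ≤ ζε². -/

import Mathlib

open scoped RealInnerProductSpace

private lemma expand_aux {E : Type*} [NormedAddCommGroup E] [InnerProductSpace ℝ E]
    (t : ℝ) (v g x y : E) :
    ⟪v + t • g, x + t • y⟫ = ⟪v, x⟫ + t * ⟪v, y⟫ + t * ⟪g, x⟫ + t ^ 2 * ⟪g, y⟫ := by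
  simp only [inner_add_left, inner_add_right, real_inner_smul_left, real_inner_smul_right]
  ring

private lemma add_smul_right_aux {E : Type*} [NormedAddCommGroup E] [InnerProductSpace ℝ E]
    (c : ℝ) (a b e : E) : ⟪a, b + c • e⟫ = ⟪a, b⟫ + c * ⟪a, e⟫ := by
  rw [inner_add_right, real_inner_smul_right]

private lemma sub_split_aux {E : Type*} [NormedAddCommGroup E] [InnerProductSpace ℝ E]
    (v w x y : E) : ⟪v - w, x⟫ + ⟪w, x - y⟫ = ⟪v, x⟫ - ⟪w, y⟫ + (⟪w, x⟫ - ⟪v, x⟫)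
      + (⟪v, x⟫ - ⟪w, x⟫) := by
  rw [inner_sub_left, inner_sub_right]
  ring

set_option maxHeartbeats 1000000 in
/-- location of the maximizer of `ψ(v) = ⟨ξ, v⟩ + vᵀBv` over the
closed ball of radius `ε`: the maximizer lies on the sphere of radius `ε`, within
distance `ζε²` of `ε|ξ|⁻¹ξ`, where `ζ = 4‖B‖/|ξ|`. -/
theorem stmt0 {d : ℕ} (B : Matrix (Fin d) (Fin d) ℝ) (hB : B.IsSymm)
    (ξ : EuclideanSpace ℝ (Fin d)) (hξ : ξ ≠ 0)
    (ψ : EuclideanSpace ℝ (Fin d) → ℝ)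
    (hψ : ∀ v, ψ v = ⟪ξ, v⟫ + ∑ i, ∑ j, v i * B i j * v j)
    (ζ : ℝ) (hζ : ζ = 4 * ‖Matrix.toEuclideanCLM (𝕜 := ℝ) B‖ / ‖ξ‖)
    (ε : ℝ) (hε : 0 < ε) (hεζ : ε < ζ⁻¹)
    (v : EuclideanSpace ℝ (Fin d)) (hv : v ∈ Metric.closedBall 0 ε)
    (hmax : IsMaxOn ψ (Metric.closedBall 0 ε) v) :
    ‖v‖ = ε ∧ ‖v - (ε / ‖ξ‖) • ξ‖ ≤ ζ * ε ^ 2 := by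
  set L : EuclideanSpace ℝ (Fin d) →L[ℝ] EuclideanSpace ℝ (Fin d) :=
    Matrix.toEuclideanCLM (𝕜 := ℝ) B with hLdef
  set M : ℝ := ‖L‖ with hMdef
  have hMnonneg : 0 ≤ M := norm_nonneg _
  have hxipos : (0:ℝ) < ‖ξ‖ := norm_pos_iff.mpr hξ
  -- The quadratic form
  have hLapp : ∀ x : EuclideanSpace ℝ (Fin d), ∀ i, L x i = ∑ j, B i j * x j :=
    fun x i => rfl
  have hQ : ∀ x y : EuclideanSpace ℝ (Fin d),
      ⟪x, L y⟫ = ∑ i, ∑ j, x i * B i j * y j := by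
    intro x y
    simp only [PiLp.inner_apply, RCLike.inner_apply, starRingEnd_apply, star_trivial, hLapp,
      Finset.mul_sum, mul_assoc]
    refine Finset.sum_congr rfl fun i _ => ?_
    rw [Finset.sum_mul]; exact Finset.sum_congr rfl fun j _ => by ring
  have hψ' : ∀ x, ψ x = ⟪ξ, x⟫ + ⟪x, L x⟫ := by
    intro x; rw [hψ, hQ]
  -- self-adjointness
  have hsym : ∀ x y : EuclideanSpace ℝ (Fin d), ⟪L x, y⟫ = ⟪x, L y⟫ := by
    intro x y
    rw [real_inner_comm, hQ, hQ, Finset.sum_comm]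
    refine Finset.sum_congr rfl fun i _ => Finset.sum_congr rfl fun j _ => ?_
    rw [hB.apply i j]; ring
  have hQle : ∀ x y : EuclideanSpace ℝ (Fin d), ⟪x, L y⟫ ≤ M * (‖x‖ * ‖y‖) := by
    intro x y
    calc ⟪x, L y⟫ ≤ ‖x‖ * ‖L y‖ := real_inner_le_norm _ _
      _ ≤ ‖x‖ * (M * ‖y‖) := by
          apply mul_le_mul_of_nonneg_left (L.le_opNorm y) (norm_nonneg _)
      _ = M * (‖x‖ * ‖y‖) := by ring
  -- positivity of ζ and M
  have hζpos : 0 < ζ := by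
    by_contra h
    push_neg at h
    have : ζ⁻¹ ≤ 0 := inv_nonpos.mpr h
    linarith
  have hMpos : 0 < M := by
    by_contra h
    push_neg at h
    rw [hζ] at hζpos
    have : 4 * M / ‖ξ‖ ≤ 0 := div_nonpos_of_nonpos_of_nonneg (by linarith) hxipos.le
    linarith
  have hζε : ζ * ε < 1 := by
    have := mul_lt_mul_of_pos_left hεζ hζpos
    rwa [mul_inv_cancel₀ (ne_of_gt hζpos)] at this
  have h4M : 4 * M * ε < ‖ξ‖ := by
    rw [hζ, div_mul_eq_mul_div, div_lt_one hxipos] at hζε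
    linarith
  have hvle : ‖v‖ ≤ ε := by
    simpa [Metric.mem_closedBall, dist_zero_right] using hv
  -- Part 1: ‖v‖ = ε
  have hnv : ‖v‖ = ε := by
    by_contra hne
    have hvlt : ‖v‖ < ε := lt_of_le_of_ne hvle hne
    set g : EuclideanSpace ℝ (Fin d) := ξ + (2:ℝ) • L v with hgdef
    have hLv : ‖L v‖ ≤ M * ε := by
      calc ‖L v‖ ≤ M * ‖v‖ := L.le_opNorm v
        _ ≤ M * ε := by nlinarith
    have hgge : ‖ξ‖ - 2 * M * ε ≤ ‖g‖ := by
      have h1 : ‖ξ‖ ≤ ‖g‖ + ‖(2:ℝ) • L v‖ := by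
        have he : ξ = g - (2:ℝ) • L v := by rw [hgdef]; abel
        calc ‖ξ‖ = ‖g - (2:ℝ) • L v‖ := by rw [← he]
          _ ≤ ‖g‖ + ‖(2:ℝ) • L v‖ := norm_sub_le _ _
      have h2 : ‖(2:ℝ) • L v‖ ≤ 2 * M * ε := by
        rw [norm_smul, Real.norm_ofNat]
        nlinarith
      linarith
    have hgpos : 0 < ‖g‖ := by nlinarith
    set t : ℝ := min ((ε - ‖v‖) / ‖g‖) (1 / (2 * M)) with htdef
    have htpos : 0 < t := by
      apply lt_min
      · exact div_pos (by linarith) hgpos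
      · positivity
    have htM : t * M < 1 := by
      have ht2 : t ≤ 1 / (2 * M) := min_le_right _ _
      calc t * M ≤ (1 / (2 * M)) * M := by nlinarith
        _ = 1 / 2 := by field_simp
        _ < 1 := by norm_num
    have hmem : v + t • g ∈ Metric.closedBall (0 : EuclideanSpace ℝ (Fin d)) ε := by
      rw [Metric.mem_closedBall, dist_zero_right]
      have h1 : t ≤ (ε - ‖v‖) / ‖g‖ := min_le_left _ _
      calc ‖v + t • g‖ ≤ ‖v‖ + ‖t • g‖ := norm_add_le _ _
        _ = ‖v‖ + t * ‖g‖ := by rw [norm_smul, Real.norm_eq_abs, abs_of_pos htpos]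
        _ ≤ ‖v‖ + ((ε - ‖v‖) / ‖g‖) * ‖g‖ := by nlinarith
        _ = ε := by field_simp; ring
    have hexp : ψ (v + t • g) = ψ v + t * ⟪g, g⟫ + t ^ 2 * ⟪g, L g⟫ := by
      rw [hψ', hψ']
      have hmap : L (v + t • g) = L v + t • L g := by
        rw [map_add, map_smul]
      rw [hmap]
      have e1 : ⟪v + t • g, L v + t • L g⟫
          = ⟪v, L v⟫ + t * ⟪v, L g⟫ + t * ⟪g, L v⟫ + t ^ 2 * ⟪g, L g⟫ :=
        expand_aux t v g (L v) (L g)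
      have e2 : ⟪v, L g⟫ = ⟪g, L v⟫ := by
        rw [← hsym v g, real_inner_comm]
      have e3 : ⟪ξ, v + t • g⟫ = ⟪ξ, v⟫ + t * ⟪ξ, g⟫ := add_smul_right_aux t ξ v g
      have e4 : ⟪ξ, g⟫ + 2 * ⟪g, L v⟫ = ⟪g, g⟫ := by
        have hgg2 : ⟪g, g⟫ = ⟪g, ξ⟫ + 2 * ⟪g, L v⟫ := add_smul_right_aux 2 g ξ (L v)
        rw [hgg2, real_inner_comm ξ g]
      rw [e1, e2, e3]
      linear_combination t * e4
    have hLgbound : - (M * (‖g‖ * ‖g‖)) ≤ ⟪g, L g⟫ := by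
      have hb := hQle (-g) g
      have hng : ⟪-g, L g⟫ = - ⟪g, L g⟫ := by rw [inner_neg_left]
      rw [hng, norm_neg] at hb
      linarith
    have hgg : ⟪g, g⟫ = ‖g‖ ^ 2 := real_inner_self_eq_norm_sq g
    have hgain : 0 < t * ⟪g, g⟫ + t ^ 2 * ⟪g, L g⟫ := by
      rw [hgg]
      nlinarith [sq_nonneg ‖g‖, mul_pos htpos (mul_pos hgpos hgpos)]
    have hle := hmax hmem
    simp only [Set.mem_setOf_eq] at hle
    rw [hexp] at hle
    linarith
  refine ⟨hnv, ?_⟩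
  -- Part 2
  set w : EuclideanSpace ℝ (Fin d) := (ε / ‖ξ‖) • ξ with hwdef
  have hnw : ‖w‖ = ε := by
    rw [hwdef, norm_smul, Real.norm_eq_abs, abs_of_pos (div_pos hε hxipos)]
    field_simp
  have hwmem : w ∈ Metric.closedBall (0 : EuclideanSpace ℝ (Fin d)) ε := by
    rw [Metric.mem_closedBall, dist_zero_right, hnw]
  have hψwv : ψ w ≤ ψ v := hmax hwmem
  set D : ℝ := ‖v - w‖ with hDdef
  have hDnonneg : 0 ≤ D := norm_nonneg _
  -- key estimate ⟪ξ, w - v⟫ ≤ 2 M ε D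
  have hkey : ⟪ξ, w - v⟫ ≤ 2 * M * ε * D := by
    rw [hψ', hψ'] at hψwv
    have hsplit : ⟪v, L v⟫ - ⟪w, L w⟫ = ⟪v - w, L v⟫ + ⟪w, L (v - w)⟫ := by
      rw [map_sub]
      have := sub_split_aux v w (L v) (L w)
      linarith
    have h1 : ⟪v - w, L v⟫ ≤ M * ε * D := by
      have hb := hQle (v - w) v
      rw [hnv] at hb
      calc ⟪v - w, L v⟫ ≤ M * (‖v - w‖ * ε) := hb
        _ = M * ε * D := by rw [hDdef]; ring
    have h2 : ⟪w, L (v - w)⟫ ≤ M * ε * D := by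
      have hb := hQle w (v - w)
      rw [hnw] at hb
      calc ⟪w, L (v - w)⟫ ≤ M * (ε * ‖v - w‖) := hb
        _ = M * ε * D := by rw [hDdef]; ring
    have hξwv : ⟪ξ, w - v⟫ = ⟪ξ, w⟫ - ⟪ξ, v⟫ := inner_sub_right ξ w v
    rw [hξwv]
    linarith
  -- D² = (2ε/‖ξ‖) ⟪ξ, w - v⟫
  have hD2 : D ^ 2 = (2 * ε / ‖ξ‖) * ⟪ξ, w - v⟫ := by
    have hexp : D ^ 2 = ‖v‖ ^ 2 - 2 * ⟪v, w⟫ + ‖w‖ ^ 2 := by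
      rw [hDdef]; exact norm_sub_sq_real v w
    have hvw : ⟪v, w⟫ = (ε / ‖ξ‖) * ⟪ξ, v⟫ := by
      rw [hwdef, real_inner_smul_right, real_inner_comm]
    have hξw : ⟪ξ, w⟫ = ε * ‖ξ‖ := by
      rw [hwdef, real_inner_smul_right, real_inner_self_eq_norm_sq]
      field_simp
    have hsub : ⟪ξ, w - v⟫ = ε * ‖ξ‖ - ⟪ξ, v⟫ := by
      rw [inner_sub_right, hξw]
    rw [hexp, hnv, hnw, hvw, hsub]
    field_simp
    ring
  have hDle : D ^ 2 ≤ ζ * ε ^ 2 * D := by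
    calc D ^ 2 = (2 * ε / ‖ξ‖) * ⟪ξ, w - v⟫ := hD2
      _ ≤ (2 * ε / ‖ξ‖) * (2 * M * ε * D) := by
          apply mul_le_mul_of_nonneg_left hkey
          positivity
      _ = ζ * ε ^ 2 * D := by rw [hζ]; field_simp; ring
  rcases eq_or_lt_of_le hDnonneg with h | h
  · have h0 : D = 0 := h.symm
    rw [h0]
    positivity
  · nlinarith
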